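/- Let X and Y be normed spaces with X finite-dimensional, H ⊆ X open, f, g : H → Y locally Lipschitz, and A := {x ∈ H : f(x) = g(x)}. If x is a Lebesgue density point of A, then f is Fréchet differentiable at x if and only if g is Fréchet differentiable at x, and in that case Df(x) = Dg(x). -/

import Mathlib

open Filter Metric Topology MeasureTheory ENNReal

/-- At a Lebesgue density point of the agreement set of two locally Lipschitz maps,
one is Fréchet differentiable iff the other is, with the same derivative. -/
theorem stmt7 {X Y : Type*} [NormedAddCommGroup X] [NormedSpace ℝ X]
    [FiniteDimensional ℝ X] [MeasurableSpace X] [BorelSpace X]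
    [NormedAddCommGroup Y] [NormedSpace ℝ Y]
    (μ : Measure X) [μ.IsAddHaarMeasure]
    (H : Set X) (hH : IsOpen H) (f g : X → Y)
    (hf : ∀ x ∈ H, ∃ (K : NNReal) (ε : ℝ), 0 < ε ∧ ball x ε ⊆ H ∧
      LipschitzOnWith K f (ball x ε))
    (hg : ∀ x ∈ H, ∃ (K : NNReal) (ε : ℝ), 0 < ε ∧ ball x ε ⊆ H ∧
      LipschitzOnWith K g (ball x ε))
    (x : X) (hx : x ∈ H)
    (hdensity : Tendsto
      (fun r : ℝ => μ ({y ∈ H | f y = g y} ∩ closedBall x r) / μ (closedBall x r))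
      (𝓝[>] (0 : ℝ)) (𝓝 1)) :
    ∀ L : X →L[ℝ] Y, HasFDerivAt f L x ↔ HasFDerivAt g L x := by
  obtain ⟨Kf, εf, hεf, hfH, hfl⟩ := hf x hx
  obtain ⟨Kg, εg, hεg, hgH, hgl⟩ := hg x hx
  set r0 := min εf εg with hr0def
  have hr0 : 0 < r0 := lt_min hεf hεg
  set K : NNReal := Kf + Kg with hKdef
  have hK : (0:ℝ) ≤ (K:ℝ) := K.coe_nonneg
  have hK1 : (0:ℝ) < (K:ℝ) + 1 := by positivity
  set h : X → Y := fun y => f y - g y with hhdef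
  have hlip : LipschitzOnWith K h (ball x r0) :=
    (hfl.mono (ball_subset_ball (min_le_left _ _))).sub
      (hgl.mono (ball_subset_ball (min_le_right _ _)))
  set A : Set X := {y ∈ H | f y = g y} with hAdef
  have hA0 : ∀ a ∈ A, h a = 0 := fun a ha => sub_eq_zero.mpr ha.2
  have hBfin : ∀ r : ℝ, μ (closedBall x r) ≠ ∞ := fun r => measure_closedBall_lt_top.ne
  -- Step 1: points of A arbitrarily close to x
  have hclose : ∀ r : ℝ, 0 < r → (A ∩ closedBall x r).Nonempty := by
    intro r hr
    have h1 : ∀ᶠ s in 𝓝[>] (0:ℝ),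
        0 < μ (A ∩ closedBall x s) / μ (closedBall x s) :=
      hdensity.eventually (eventually_gt_nhds zero_lt_one)
    have h2 : ∀ᶠ s in 𝓝[>] (0:ℝ), s < r :=
      (eventually_lt_nhds hr).filter_mono nhdsWithin_le_nhds
    obtain ⟨s, hs1, hs2⟩ := (h1.and h2).exists
    have hne : μ (A ∩ closedBall x s) ≠ 0 := by
      intro hzero
      rw [hzero, ENNReal.zero_div] at hs1
      exact lt_irrefl _ hs1
    obtain ⟨a, ha⟩ := nonempty_of_measure_ne_zero hne
    exact ⟨a, ha.1, closedBall_subset_closedBall hs2.le ha.2⟩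
  -- Step 2: h x = 0
  have hx0 : h x = 0 := by
    rw [← norm_le_zero_iff]
    refine le_of_forall_pos_le_add (fun ε hε => ?_)
    set r := min (r0 / 2) (ε / ((K:ℝ) + 1)) with hrdef
    have hrpos : 0 < r := lt_min (by positivity) (by positivity)
    obtain ⟨a, haA, har⟩ := hclose r hrpos
    have hdax : dist a x ≤ r := mem_closedBall.mp har
    have haball : a ∈ ball x r0 := by
      rw [mem_ball]
      have h1 : r ≤ r0 / 2 := min_le_left _ _
      linarith
    have hxball : x ∈ ball x r0 := mem_ball_self hr0
    have hd := hlip.dist_le_mul x hxball a haball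
    have hb : ‖h x‖ ≤ (K:ℝ) * r := by
      calc ‖h x‖ = dist (h x) (h a) := by rw [hA0 a haA, dist_zero_right]
        _ ≤ (K:ℝ) * dist x a := hd
        _ ≤ (K:ℝ) * r := by
            rw [dist_comm]
            exact mul_le_mul_of_nonneg_left hdax hK
    have hrε : ((K:ℝ)) * r ≤ ε := by
      have h1 : r ≤ ε / ((K:ℝ) + 1) := min_le_right _ _
      have h2 : ((K:ℝ)) * r ≤ ((K:ℝ) + 1) * (ε / ((K:ℝ) + 1)) :=
        mul_le_mul (by linarith) h1 hrpos.le (by linarith)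
      rwa [mul_div_cancel₀ _ hK1.ne'] at h2
    linarith
  -- Step 3: h has derivative 0 at x
  have hderiv : HasFDerivAt h (0 : X →L[ℝ] Y) x := by
    rw [hasFDerivAt_iff_isLittleO, Asymptotics.isLittleO_iff]
    intro c hc
    set ε := min c ((K:ℝ) + 1) with hεdef
    have hεpos : 0 < ε := lt_min hc hK1
    have hεle : ε ≤ (K:ℝ) + 1 := min_le_right _ _
    set δ := ε / (2 * ((K:ℝ) + 1)) with hδdef
    have hδpos : 0 < δ := by positivity
    set n := Module.finrank ℝ X with hn
    set cE := ENNReal.ofReal (δ ^ n) with hcEdef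
    have hcEpos : 0 < cE := ENNReal.ofReal_pos.mpr (by positivity)
    have hlt1 : (1 : ℝ≥0∞) - cE < 1 :=
      ENNReal.sub_lt_self ENNReal.one_ne_top one_ne_zero hcEpos.ne'
    have hev : ∀ᶠ s in 𝓝[>] (0:ℝ),
        1 - cE < μ (A ∩ closedBall x s) / μ (closedBall x s) :=
      hdensity.eventually (eventually_gt_nhds hlt1)
    obtain ⟨r1, hr1pos, hr1⟩ : ∃ r1 > 0, ∀ s : ℝ, 0 < s → s < r1 →
        1 - cE < μ (A ∩ closedBall x s) / μ (closedBall x s) := by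
      rcases mem_nhdsGT_iff_exists_Ioo_subset.mp hev with ⟨u, hu, hsub⟩
      exact ⟨u, hu, fun s hs hsu => hsub ⟨hs, hsu⟩⟩
    have hmin : (0:ℝ) < min r0 r1 / 2 := by
      have := lt_min hr0 hr1pos
      positivity
    filter_upwards [Metric.ball_mem_nhds x hmin] with y hy
    simp only [ContinuousLinearMap.zero_apply, sub_zero, hx0]
    by_cases hyx : y = x
    · simp [hyx, hx0]
    · suffices hgoal : ‖h y‖ ≤ ε * ‖y - x‖ by
        calc ‖h y‖ ≤ ε * ‖y - x‖ := hgoal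
          _ ≤ c * ‖y - x‖ :=
            mul_le_mul_of_nonneg_right (min_le_left _ _) (norm_nonneg _)
      by_contra hcon
      push_neg at hcon
      set t := ‖y - x‖ with htdef
      have ht : 0 < t := by
        rw [htdef, norm_pos_iff]
        exact sub_ne_zero.mpr hyx
      have hdyx : dist y x = t := dist_eq_norm y x
      have hyb : dist y x < min r0 r1 / 2 := mem_ball.mp hy
      have htr0 : t < r0 / 2 := by
        have h1 := min_le_left r0 r1
        rw [hdyx] at hyb
        linarith
      have htr1 : t < r1 / 2 := by
        have h1 := min_le_right r0 r1
        rw [hdyx] at hyb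
        linarith
      set r := 2 * t with hrdef
      have hrpos : 0 < r := by positivity
      set ρ := δ * r with hρdef
      have hρpos : 0 < ρ := by positivity
      have hkey : ρ * ((K:ℝ) + 1) = ε * t := by
        rw [hρdef, hrdef, hδdef]
        field_simp
      have hρt : ρ ≤ t := by nlinarith
      -- the small ball around y contains no point of A
      have hdisj : ∀ a ∈ A, a ∉ closedBall y ρ := by
        intro a haA hamem
        have hday : dist a y ≤ ρ := mem_closedBall.mp hamem
        have haball : a ∈ ball x r0 := by
          rw [mem_ball]
          have h1 : dist a x ≤ dist a y + dist y x := dist_triangle a y x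
          rw [hdyx] at h1
          linarith
        have hyball : y ∈ ball x r0 := by
          rw [mem_ball, hdyx]; linarith
        have hd := hlip.dist_le_mul y hyball a haball
        have hbound : ‖h y‖ ≤ ε * t := by
          calc ‖h y‖ = dist (h y) (h a) := by rw [hA0 a haA, dist_zero_right]
            _ ≤ (K:ℝ) * dist y a := hd
            _ ≤ (K:ℝ) * ρ := by
                rw [dist_comm]
                exact mul_le_mul_of_nonneg_left hday hK
            _ ≤ ε * t := by nlinarith
        exact absurd hbound (not_le.mpr hcon)
      -- measure estimate
      have hDB : closedBall y ρ ⊆ closedBall x r :=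
        closedBall_subset_closedBall' (by rw [hdyx]; linarith)
      have hAD : A ∩ closedBall x r ⊆ closedBall x r \ closedBall y ρ :=
        fun a ha => ⟨ha.2, hdisj a ha.1⟩
      have hmd : μ (closedBall x r \ closedBall y ρ)
          = μ (closedBall x r) - μ (closedBall y ρ) :=
        measure_diff hDB measurableSet_closedBall.nullMeasurableSet
          measure_closedBall_lt_top.ne
      have hρr : μ (closedBall y ρ) = cE * μ (closedBall x r) := by
        have hpow : ρ ^ n = δ ^ n * r ^ n := by rw [hρdef, mul_pow]
        rw [Measure.addHaar_closedBall μ y hρpos.le,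
          Measure.addHaar_closedBall μ x hrpos.le, hpow,
          ENNReal.ofReal_mul (by positivity), mul_assoc]
      have hratio : μ (A ∩ closedBall x r) / μ (closedBall x r) ≤ 1 - cE := by
        have h1 : μ (A ∩ closedBall x r) ≤ (1 - cE) * μ (closedBall x r) := by
          calc μ (A ∩ closedBall x r)
              ≤ μ (closedBall x r \ closedBall y ρ) := measure_mono hAD
            _ = μ (closedBall x r) - μ (closedBall y ρ) := hmd
            _ = 1 * μ (closedBall x r) - cE * μ (closedBall x r) := by
                rw [one_mul, hρr]
            _ = (1 - cE) * μ (closedBall x r) :=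
                (ENNReal.sub_mul (fun _ _ => hBfin r)).symm
        exact ENNReal.div_le_of_le_mul h1
      have hlt : 1 - cE < μ (A ∩ closedBall x r) / μ (closedBall x r) :=
        hr1 r hrpos (by rw [hrdef]; linarith)
      exact absurd hlt hratio.not_gt
  -- Step 4: transfer differentiability through h
  intro L
  constructor
  · intro hF
    have h2 := hF.sub hderiv
    have heq : (fun y => f y - h y) = g := by
      funext y
      simp [hhdef]
    rw [show f - h = fun y => f y - h y from rfl, heq, sub_zero] at h2
    exact h2
  · intro hG
    have h2 := hG.add hderiv
    have heq : (fun y => g y + h y) = f := by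
      funext y
      simp [hhdef]
    rw [show g + h = fun y => g y + h y from rfl, heq, add_zero] at h2
    exact h2
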